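/- Let V be a finite set and 𝒞 a finite set of betweenness constraints over V with |𝒞| = m, and suppose (V, 𝒞) is irreducible. Then the expectation of X(φ)^2, taken over φ chosen uniformly at random from the 4^{|V|} functions V → {0,1,2,3}, is at least (11/768)·m, where X(φ) = Σ_{C ∈ 𝒞} w(C, φ). -/

import Mathlib

open scoped Classical

noncomputable section

/-- A betweenness constraint `(v, {x, y})`: a variable together with an unordered pair. -/
abbrev Constraint (V : Type*) := V × Sym2 V

/-- The elements of a betweenness constraint are pairwise distinct. -/
def IsProperConstraint {V : Type*} (C : Constraint V) : Prop :=
  ∃ x y, C.2 = s(x, y) ∧ x ≠ y ∧ C.1 ≠ x ∧ C.1 ≠ y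

/-- A bijection `α : V → {1, …, |V|}` satisfies the constraint `(v, {x, y})` if
`α x < α v < α y` or `α y < α v < α x`. -/
def Satisfies {V : Type*} [Fintype V] (α : V ≃ Fin (Fintype.card V)) (C : Constraint V) : Prop :=
  ∃ x y, C.2 = s(x, y) ∧ α x < α C.1 ∧ α C.1 < α y

/-- The number of constraints of `𝒞` satisfied by `α`. -/
def satCount {V : Type*} [Fintype V] (α : V ≃ Fin (Fintype.card V))
    (𝒞 : Finset (Constraint V)) : ℕ :=
  (𝒞.filter fun C => Satisfies α C).card

/-- The complete triple of betweenness constraints on `{u, v, w}`. -/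
def completeTriple {V : Type*} [DecidableEq V] (u v w : V) : Finset (Constraint V) :=
  {(u, s(v, w)), (v, s(u, w)), (w, s(u, v))}

/-- An instance is irreducible if it contains no complete triple. -/
def IrreducibleInstance {V : Type*} [DecidableEq V] (𝒞 : Finset (Constraint V)) : Prop :=
  ¬ ∃ u v w : V, u ≠ v ∧ u ≠ w ∧ v ≠ w ∧ completeTriple u v w ⊆ 𝒞

/-- The weight `w(C, φ)` of a constraint `(vᵢ, {vⱼ, vₖ})` under `φ : V → {0,1,2,3}`. -/
def weight {V : Type*} (φ : V → Fin 4) (C : Constraint V) : ℝ :=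
  if (C.2.map φ).IsDiag ∧ φ C.1 ∈ C.2.map φ then 0
  else if (C.2.map φ).IsDiag then -1/3
  else if φ C.1 ∈ C.2.map φ then 1/6
  else if ∃ x y : Fin 4, C.2.map φ = s(x, y) ∧ x < φ C.1 ∧ φ C.1 < y then 2/3
  else -1/3

/-- `α` is `φ`-compatible if `φ u < φ v` implies `α u < α v`. -/
def Compatible {V : Type*} [Fintype V] (φ : V → Fin 4)
    (α : V ≃ Fin (Fintype.card V)) : Prop :=
  ∀ u v : V, φ u < φ v → α u < α v

namespace SMLB

/-! ### Finite (integer-valued) Fourier data for the weight function on `Fin 4` -/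



/-- character table for `Z2 × Z2` encoded in `Fin 4` (values `±1`). -/
def sgnZ (m a : Fin 4) : ℤ := (-1 : ℤ) ^ (m.val % 2 * (a.val % 2) + m.val / 2 * (a.val / 2))

/-- six times the weight, as an integer function of the three values. -/
def wq6 (a b c : Fin 4) : ℤ :=
  if b = c ∧ (a = b ∨ a = c) then 0
  else if b = c then -2
  else if a = b ∨ a = c then 1
  else if (b < a ∧ a < c) ∨ (c < a ∧ a < b) then 4
  else -2

/-- `48` times the Fourier coefficients of the weight. -/
def c48N : ℕ → ℕ → ℕ → ℤ
  | 0, 0, 3 => 3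
  | 0, 1, 1 => -2
  | 0, 1, 2 => -3
  | 0, 2, 1 => -3
  | 0, 2, 2 => -8
  | 0, 3, 0 => 3
  | 0, 3, 3 => -2
  | 1, 0, 1 => 1
  | 1, 1, 0 => 1
  | 1, 2, 3 => 1
  | 1, 3, 2 => 1
  | 2, 0, 1 => 3
  | 2, 0, 2 => 4
  | 2, 1, 0 => 3
  | 2, 1, 3 => -2
  | 2, 2, 0 => 4
  | 2, 2, 3 => -3
  | 2, 3, 1 => -2
  | 2, 3, 2 => -3
  | 3, 0, 0 => -6
  | 3, 0, 3 => 1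
  | 3, 1, 2 => 1
  | 3, 2, 1 => 1
  | 3, 2, 2 => 6
  | 3, 3, 0 => 1
  | _, _, _ => 0

def c48 (m1 m2 m3 : Fin 4) : ℤ := c48N m1.val m2.val m3.val

lemma sgnZ_zero : ∀ a, sgnZ 0 a = 1 := by decide

lemma sgnZ_orth : ∀ m m' : Fin 4, (∑ a : Fin 4, sgnZ m a * sgnZ m' a) = if m = m' then 4 else 0 := by
  decide

lemma c48_symm : ∀ m1 m2 m3 : Fin 4, c48 m1 m2 m3 = c48 m1 m3 m2 := by decide

lemma wq6_expansion : ∀ a b c : Fin 4,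
    8 * wq6 a b c = ∑ m : Fin 4 × Fin 4 × Fin 4,
      c48 m.1 m.2.1 m.2.2 * sgnZ m.1 a * sgnZ m.2.1 b * sgnZ m.2.2 c := by decide

/-- map back nonzero elements of `Fin 4` to `Fin 3`. -/
def pre (a : Fin 4) : Fin 3 := ⟨min (a.val - 1) 2, by omega⟩

lemma succ_pre : ∀ a : Fin 4, a ≠ 0 → (pre a).succ = a := by decide
lemma pre_succ : ∀ m : Fin 3, pre m.succ = m := by decide
lemma succ_ne_zero' : ∀ m : Fin 3, (m.succ : Fin 4) ≠ 0 := by decide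

/-- The key finite inequality: on a triple with at most two constraints present,
the full-support Fourier mass is at least `11/768 = 33/48²` per constraint. -/
lemma key_ineq : ∀ e1 e2 e3 : Bool, (e1 && e2 && e3) = false →
    33 * ((if e1 then 1 else 0) + (if e2 then 1 else 0) + (if e3 then 1 else 0)) ≤
    ∑ m : Fin 3 × Fin 3 × Fin 3,
      ((if e1 then c48 m.1.succ m.2.1.succ m.2.2.succ else 0) +
       (if e2 then c48 m.2.1.succ m.1.succ m.2.2.succ else 0) +
       (if e3 then c48 m.2.2.succ m.1.succ m.2.1.succ else 0)) ^ 2 := by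
  decide



/-! ### Real-valued Fourier analysis over `V → Fin 4` -/

variable {V : Type*} [Fintype V] [DecidableEq V]

def sR (m a : Fin 4) : ℝ := (sgnZ m a : ℝ)

def chi (μ φ : V → Fin 4) : ℝ := ∏ v, sR (μ v) (φ v)

def cR (m1 m2 m3 : Fin 4) : ℝ := (c48 m1 m2 m3 : ℝ) / 48

lemma sR_zero (a : Fin 4) : sR 0 a = 1 := by simp [sR, sgnZ_zero]

lemma sR_orth (m m' : Fin 4) : (∑ a : Fin 4, sR m a * sR m' a) = if m = m' then (4 : ℝ) else 0 := by
  have h := congrArg (fun z : ℤ => (z : ℝ)) (sgnZ_orth m m')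
  push_cast at h
  simpa [sR] using h

/-- factorization of a sum over functions of a product over coordinates. -/
lemma sum_pi_prod (g : V → Fin 4 → ℝ) :
    ∑ φ : V → Fin 4, ∏ v, g v (φ v) = ∏ v, ∑ a : Fin 4, g v a := by
  rw [← Finset.sum_prod_piFinset Finset.univ g, Fintype.piFinset_univ]

lemma prod_ite_mask (ν μ : V → Fin 4) :
    (∏ v, if ν v = μ v then (4:ℝ) else 0) = if ν = μ then (4:ℝ) ^ Fintype.card V else 0 := by
  by_cases h : ν = μ
  · rw [if_pos h]
    rw [Finset.prod_congr rfl fun v _ => if_pos (congrFun h v)]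
    simp [Finset.card_univ]
  · rw [if_neg h]
    obtain ⟨v, hv⟩ : ∃ v, ν v ≠ μ v := by
      by_contra hc; push_neg at hc; exact h (funext hc)
    exact Finset.prod_eq_zero (Finset.mem_univ v) (by rw [if_neg hv])

lemma chi_orth (μ ν : V → Fin 4) :
    ∑ φ : V → Fin 4, chi μ φ * chi ν φ =
      if μ = ν then (4 : ℝ) ^ Fintype.card V else 0 := by
  have h : ∀ φ : V → Fin 4, chi μ φ * chi ν φ = ∏ v, (sR (μ v) (φ v) * sR (ν v) (φ v)) := by
    intro φ; rw [chi, chi, Finset.prod_mul_distrib]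
  rw [Finset.sum_congr rfl fun φ _ => h φ,
    sum_pi_prod (fun v a => sR (μ v) a * sR (ν v) a),
    Finset.prod_congr rfl fun v _ => sR_orth (μ v) (ν v), prod_ite_mask]

/-- The per-constraint Fourier computation. -/
lemma hat_const (i x y : V) (hxy : x ≠ y) (hix : i ≠ x) (hiy : i ≠ y) (μ : V → Fin 4) :
    ∑ φ : V → Fin 4, (wq6 (φ i) (φ x) (φ y) : ℝ) / 6 * chi μ φ =
      if ∀ v, v ∉ ({i, x, y} : Finset V) → μ v = 0 then
        (4 : ℝ) ^ Fintype.card V * cR (μ i) (μ x) (μ y) else 0 := by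
  -- real-valued expansion of the weight
  have hexp : ∀ a b c : Fin 4, (wq6 a b c : ℝ) / 6 =
      ∑ m : Fin 4 × Fin 4 × Fin 4,
        cR m.1 m.2.1 m.2.2 * sR m.1 a * sR m.2.1 b * sR m.2.2 c := by
    intro a b c
    have hc := congrArg (fun z : ℤ => (z : ℝ)) (wq6_expansion a b c)
    push_cast at hc
    have h48 : ∑ m : Fin 4 × Fin 4 × Fin 4,
        cR m.1 m.2.1 m.2.2 * sR m.1 a * sR m.2.1 b * sR m.2.2 c =
        (∑ m : Fin 4 × Fin 4 × Fin 4,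
          (c48 m.1 m.2.1 m.2.2 : ℝ) * sgnZ m.1 a * sgnZ m.2.1 b * sgnZ m.2.2 c) / 48 := by
      rw [Finset.sum_div]
      refine Finset.sum_congr rfl fun m _ => ?_
      simp only [cR, sR]; ring
    rw [h48, ← hc]; ring
  set n := Fintype.card V with hn
  have key : ∀ m : Fin 4 × Fin 4 × Fin 4,
      (∑ φ : V → Fin 4, sR m.1 (φ i) * sR m.2.1 (φ x) * sR m.2.2 (φ y) * chi μ φ) =
      if (fun v => if v = i then m.1 else if v = x then m.2.1 else if v = y then m.2.2 else 0) = μ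
        then (4:ℝ) ^ n else 0 := by
    intro m
    set ν : V → Fin 4 :=
      fun v => if v = i then m.1 else if v = x then m.2.1 else if v = y then m.2.2 else 0 with hν
    have hpt : ∀ φ : V → Fin 4,
        sR m.1 (φ i) * sR m.2.1 (φ x) * sR m.2.2 (φ y) * chi μ φ =
        ∏ v, (sR (ν v) (φ v) * sR (μ v) (φ v)) := by
      intro φ
      rw [Finset.prod_mul_distrib]
      have hsplit : ∀ v : V, sR (ν v) (φ v) =
          (if v = i then sR m.1 (φ v) else 1) * ((if v = x then sR m.2.1 (φ v) else 1) *
          (if v = y then sR m.2.2 (φ v) else 1)) := by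
        intro v
        simp only [hν]
        by_cases h1 : v = i
        · subst h1; simp [hix, hiy]
        · by_cases h2 : v = x
          · subst h2; simp [h1, hxy]
          · by_cases h3 : v = y
            · subst h3; simp [h1, h2]
            · simp [h1, h2, h3, sR_zero]
      have hprod : (∏ v, sR (ν v) (φ v)) = sR m.1 (φ i) * sR m.2.1 (φ x) * sR m.2.2 (φ y) := by
        rw [Finset.prod_congr rfl fun v _ => hsplit v, Finset.prod_mul_distrib,
          Finset.prod_mul_distrib]
        rw [Finset.prod_ite_eq' Finset.univ i (fun v => sR m.1 (φ v)),
          Finset.prod_ite_eq' Finset.univ x (fun v => sR m.2.1 (φ v)),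
          Finset.prod_ite_eq' Finset.univ y (fun v => sR m.2.2 (φ v))]
        simp [mul_assoc]
      rw [hprod, chi]
    rw [Finset.sum_congr rfl fun φ _ => hpt φ,
      sum_pi_prod (fun v a => sR (ν v) a * sR (μ v) a),
      Finset.prod_congr rfl fun v _ => sR_orth (ν v) (μ v), prod_ite_mask]
  -- swap the sums
  have hswap : ∑ φ : V → Fin 4, (wq6 (φ i) (φ x) (φ y) : ℝ) / 6 * chi μ φ =
      ∑ m : Fin 4 × Fin 4 × Fin 4, cR m.1 m.2.1 m.2.2 *
        ∑ φ : V → Fin 4, sR m.1 (φ i) * sR m.2.1 (φ x) * sR m.2.2 (φ y) * chi μ φ := by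
    simp_rw [Finset.mul_sum]
    rw [Finset.sum_comm]
    refine Finset.sum_congr rfl fun φ _ => ?_
    rw [hexp (φ i) (φ x) (φ y), Finset.sum_mul]
    refine Finset.sum_congr rfl fun m _ => ?_
    ring
  rw [hswap, Finset.sum_congr rfl fun m _ => congrArg _ (key m)]
  by_cases hout : ∀ v, v ∉ ({i, x, y} : Finset V) → μ v = 0
  · rw [if_pos hout]
    rw [Finset.sum_eq_single (μ i, μ x, μ y)]
    · rw [if_pos, mul_comm]
      funext v
      by_cases h1 : v = i
      · subst h1; rw [if_pos rfl]
      · by_cases h2 : v = x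
        · subst h2; rw [if_neg h1, if_pos rfl]
        · by_cases h3 : v = y
          · subst h3; rw [if_neg h1, if_neg h2, if_pos rfl]
          · rw [if_neg h1, if_neg h2, if_neg h3]
            exact (hout v (by simp [h1, h2, h3])).symm
    · intro m _ hm
      rw [if_neg, mul_zero]
      intro hcontra
      apply hm
      have h1 : m.1 = μ i := by simpa using congrFun hcontra i
      have h2 : m.2.1 = μ x := by simpa [Ne.symm hix] using congrFun hcontra x
      have h3 : m.2.2 = μ y := by simpa [Ne.symm hiy, Ne.symm hxy] using congrFun hcontra y
      rw [← h1, ← h2, ← h3]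
    · intro h; exact absurd (Finset.mem_univ _) h
  · rw [if_neg hout]
    refine Finset.sum_eq_zero fun m _ => ?_
    rw [if_neg, mul_zero]
    intro hcontra
    push_neg at hout
    obtain ⟨v, hv, hv0⟩ := hout
    apply hv0
    rw [← congrFun hcontra v]
    simp only [Finset.mem_insert, Finset.mem_singleton, not_or] at hv
    rw [if_neg hv.1, if_neg hv.2.1, if_neg hv.2.2]



/-- Bessel's inequality for the orthogonal family `chi` restricted to `S`. -/
lemma bessel (S : Finset (V → Fin 4)) (X : (V → Fin 4) → ℝ) :
    ∑ μ ∈ S, (∑ φ : V → Fin 4, X φ * chi μ φ) ^ 2 / (4 : ℝ) ^ Fintype.card V ≤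
      ∑ φ : V → Fin 4, (X φ) ^ 2 := by
  set N : ℝ := (4 : ℝ) ^ Fintype.card V with hN
  have hNpos : (0 : ℝ) < N := by positivity
  set c : (V → Fin 4) → ℝ := fun μ => (∑ φ : V → Fin 4, X φ * chi μ φ) / N with hc
  have key : 0 ≤ ∑ φ : V → Fin 4, (X φ - ∑ μ ∈ S, c μ * chi μ φ) ^ 2 :=
    Finset.sum_nonneg fun φ _ => sq_nonneg _
  have expand : ∑ φ : V → Fin 4, (X φ - ∑ μ ∈ S, c μ * chi μ φ) ^ 2 =
      ∑ φ : V → Fin 4, (X φ) ^ 2 - 2 * ∑ μ ∈ S, c μ * ∑ φ : V → Fin 4, X φ * chi μ φ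
        + ∑ μ ∈ S, ∑ ν ∈ S, c μ * c ν * ∑ φ : V → Fin 4, chi μ φ * chi ν φ := by
    have h1 : ∀ φ : V → Fin 4, (X φ - ∑ μ ∈ S, c μ * chi μ φ) ^ 2 =
        (X φ) ^ 2 - 2 * (∑ μ ∈ S, c μ * (X φ * chi μ φ))
          + ∑ μ ∈ S, ∑ ν ∈ S, c μ * c ν * (chi μ φ * chi ν φ) := by
      intro φ
      have h2 : (∑ μ ∈ S, c μ * chi μ φ) ^ 2 =
          ∑ μ ∈ S, ∑ ν ∈ S, c μ * c ν * (chi μ φ * chi ν φ) := by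
        rw [sq, Finset.sum_mul_sum]
        exact Finset.sum_congr rfl fun μ _ => Finset.sum_congr rfl fun ν _ => by ring
      have h3 : X φ * ∑ μ ∈ S, c μ * chi μ φ = ∑ μ ∈ S, c μ * (X φ * chi μ φ) := by
        rw [Finset.mul_sum]
        exact Finset.sum_congr rfl fun μ _ => by ring
      rw [sub_sq, h2, ← h3]
      ring
    have t2 : ∑ φ : V → Fin 4, 2 * ∑ μ ∈ S, c μ * (X φ * chi μ φ) =
        2 * ∑ μ ∈ S, c μ * ∑ φ : V → Fin 4, X φ * chi μ φ := by
      rw [← Finset.mul_sum, Finset.sum_comm]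
      exact congrArg _ (Finset.sum_congr rfl fun μ _ => (Finset.mul_sum _ _ _).symm)
    have t3 : ∑ φ : V → Fin 4, ∑ μ ∈ S, ∑ ν ∈ S, c μ * c ν * (chi μ φ * chi ν φ) =
        ∑ μ ∈ S, ∑ ν ∈ S, c μ * c ν * ∑ φ : V → Fin 4, chi μ φ * chi ν φ := by
      rw [Finset.sum_comm]
      refine Finset.sum_congr rfl fun μ _ => ?_
      rw [Finset.sum_comm]
      exact Finset.sum_congr rfl fun ν _ => (Finset.mul_sum _ _ _).symm
    calc ∑ φ : V → Fin 4, (X φ - ∑ μ ∈ S, c μ * chi μ φ) ^ 2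
        = ∑ φ : V → Fin 4, ((X φ) ^ 2 - 2 * (∑ μ ∈ S, c μ * (X φ * chi μ φ))
            + ∑ μ ∈ S, ∑ ν ∈ S, c μ * c ν * (chi μ φ * chi ν φ)) :=
          Finset.sum_congr rfl fun φ _ => h1 φ
      _ = ∑ φ : V → Fin 4, (X φ) ^ 2 - ∑ φ : V → Fin 4, (2 * ∑ μ ∈ S, c μ * (X φ * chi μ φ))
            + ∑ φ : V → Fin 4, ∑ μ ∈ S, ∑ ν ∈ S, c μ * c ν * (chi μ φ * chi ν φ) := by
          rw [Finset.sum_add_distrib, Finset.sum_sub_distrib]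
      _ = _ := by rw [t2, t3]
  have horth : ∑ μ ∈ S, ∑ ν ∈ S, c μ * c ν * ∑ φ : V → Fin 4, chi μ φ * chi ν φ =
      N * ∑ μ ∈ S, (c μ) ^ 2 := by
    rw [Finset.mul_sum]
    refine Finset.sum_congr rfl fun μ hμ => ?_
    rw [Finset.sum_congr rfl fun ν _ => by rw [chi_orth μ ν]]
    rw [Finset.sum_eq_single μ]
    · rw [if_pos rfl]; ring
    · intro ν _ hν; rw [if_neg (fun h => hν h.symm), mul_zero]
    · intro h; exact absurd hμ h
  have hcs : ∀ μ, ∑ φ : V → Fin 4, X φ * chi μ φ = N * c μ := by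
    intro μ; rw [hc]; field_simp
  have hmid : ∑ μ ∈ S, c μ * ∑ φ : V → Fin 4, X φ * chi μ φ = N * ∑ μ ∈ S, (c μ) ^ 2 := by
    rw [Finset.mul_sum]
    refine Finset.sum_congr rfl fun μ _ => ?_
    rw [hcs μ]; ring
  rw [expand, hmid, horth] at key
  have final : N * ∑ μ ∈ S, (c μ) ^ 2 ≤ ∑ φ : V → Fin 4, (X φ) ^ 2 := by linarith
  calc ∑ μ ∈ S, (∑ φ : V → Fin 4, X φ * chi μ φ) ^ 2 / N
      = N * ∑ μ ∈ S, (c μ) ^ 2 := by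
        rw [Finset.mul_sum]
        refine Finset.sum_congr rfl fun μ _ => ?_
        rw [hcs μ]
        field_simp
    _ ≤ _ := final



/-! ### Sym2 plumbing -/

def pairFinset {V : Type*} [DecidableEq V] : Sym2 V → Finset V :=
  Sym2.lift ⟨fun x y => {x, y}, fun x y => Finset.pair_comm x y⟩

def varsC (C : Constraint V) : Finset V := insert C.1 (pairFinset C.2)

lemma cR_symm (m1 m2 m3 : Fin 4) : cR m1 m2 m3 = cR m1 m3 m2 := by
  rw [cR, cR, c48_symm]

def hatw (μ : V → Fin 4) (C : Constraint V) : ℝ :=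
  Sym2.lift ⟨fun b c => cR (μ C.1) (μ b) (μ c), fun b c => cR_symm _ _ _⟩ C.2

lemma hatw_mk (μ : V → Fin 4) (i x y : V) : hatw μ (i, s(x, y)) = cR (μ i) (μ x) (μ y) := rfl

lemma varsC_mk (i x y : V) : varsC (i, s(x, y)) = {i, x, y} := rfl

lemma between_iff (a b c : Fin 4) :
    (∃ x y : Fin 4, s(b, c) = s(x, y) ∧ x < a ∧ a < y) ↔ (b < a ∧ a < c) ∨ (c < a ∧ a < b) := by
  constructor
  · rintro ⟨x, y, hxy, h1, h2⟩
    rw [Sym2.eq_iff] at hxy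
    rcases hxy with ⟨rfl, rfl⟩ | ⟨rfl, rfl⟩
    · exact Or.inl ⟨h1, h2⟩
    · exact Or.inr ⟨h1, h2⟩
  · rintro (⟨h1, h2⟩ | ⟨h1, h2⟩)
    · exact ⟨b, c, rfl, h1, h2⟩
    · exact ⟨c, b, Sym2.eq_swap, h1, h2⟩

lemma weight_eq {V : Type*} (φ : V → Fin 4) (i x y : V) :
    weight φ (i, s(x, y)) = (wq6 (φ i) (φ x) (φ y) : ℝ) / 6 := by
  simp only [weight, wq6, Sym2.map_pair_eq, Sym2.mk_isDiag_iff, Sym2.mem_iff, between_iff]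
  split_ifs <;> norm_num

/-- Fourier coefficient of the weight of a proper constraint against a character. -/
lemma hat_weight (C : Constraint V) (hC : IsProperConstraint C) (μ : V → Fin 4) :
    ∑ φ : V → Fin 4, weight φ C * chi μ φ =
      if ∀ v, v ∉ varsC C → μ v = 0 then
        (4 : ℝ) ^ Fintype.card V * hatw μ C else 0 := by
  obtain ⟨x, y, h2, hxy, hix, hiy⟩ := hC
  have hC' : C = (C.1, s(x, y)) := by rw [← h2]
  rw [hC', varsC_mk, hatw_mk]
  rw [Finset.sum_congr rfl fun φ _ => by rw [weight_eq φ C.1 x y]]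
  exact hat_const C.1 x y hxy hix hiy μ

lemma card_varsC (C : Constraint V) (hC : IsProperConstraint C) : (varsC C).card = 3 := by
  obtain ⟨x, y, h2, hxy, hix, hiy⟩ := hC
  have hC' : C = (C.1, s(x, y)) := by rw [← h2]
  rw [hC', varsC_mk]
  rw [Finset.card_insert_of_notMem (by simp [hix, hiy]),
    Finset.card_insert_of_notMem (by simp [hxy]), Finset.card_singleton]

/-! ### The key finite inequality, real version -/

lemma key_ineqZ (p q r : Prop) [Decidable p] [Decidable q] [Decidable r] (h : ¬(p ∧ q ∧ r)) :
    (33 : ℤ) * ((if p then 1 else 0) + (if q then 1 else 0) + (if r then 1 else 0)) ≤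
    ∑ m : Fin 3 × Fin 3 × Fin 3,
      ((if p then c48 m.1.succ m.2.1.succ m.2.2.succ else 0) +
       (if q then c48 m.2.1.succ m.1.succ m.2.2.succ else 0) +
       (if r then c48 m.2.2.succ m.1.succ m.2.1.succ else 0)) ^ 2 := by
  by_cases hp : p <;> by_cases hq : q <;> by_cases hr : r <;>
    [exact absurd ⟨hp, hq, hr⟩ h; skip; skip; skip; skip; skip; skip; skip] <;>
    simp only [hp, hq, hr, if_true, if_false, ite_true, ite_false] <;>
    decide

lemma key_ineqR (p q r : Prop) [Decidable p] [Decidable q] [Decidable r] (h : ¬(p ∧ q ∧ r)) :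
    (11 / 768 : ℝ) * ((if p then 1 else 0) + (if q then 1 else 0) + (if r then 1 else 0)) ≤
    ∑ m : Fin 3 × Fin 3 × Fin 3,
      ((if p then cR m.1.succ m.2.1.succ m.2.2.succ else 0) +
       (if q then cR m.2.1.succ m.1.succ m.2.2.succ else 0) +
       (if r then cR m.2.2.succ m.1.succ m.2.1.succ else 0)) ^ 2 := by
  have h0 := key_ineqZ p q r h
  have h1 := (Int.cast_le (R := ℝ)).mpr h0
  push_cast [apply_ite (fun z : ℤ => (z : ℝ))] at h1
  have h2 : ∀ m : Fin 3 × Fin 3 × Fin 3,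
      ((if p then cR m.1.succ m.2.1.succ m.2.2.succ else 0) +
       (if q then cR m.2.1.succ m.1.succ m.2.2.succ else 0) +
       (if r then cR m.2.2.succ m.1.succ m.2.1.succ else 0)) ^ 2 =
      (((if p then (c48 m.1.succ m.2.1.succ m.2.2.succ : ℝ) else 0) +
        (if q then (c48 m.2.1.succ m.1.succ m.2.2.succ : ℝ) else 0) +
        (if r then (c48 m.2.2.succ m.1.succ m.2.1.succ : ℝ) else 0)) ^ 2) / 2304 := by
    intro m
    have e1 : (if p then cR m.1.succ m.2.1.succ m.2.2.succ else 0) =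
        (if p then (c48 m.1.succ m.2.1.succ m.2.2.succ : ℝ) else 0) / 48 := by
      split_ifs <;> simp [cR]
    have e2 : (if q then cR m.2.1.succ m.1.succ m.2.2.succ else 0) =
        (if q then (c48 m.2.1.succ m.1.succ m.2.2.succ : ℝ) else 0) / 48 := by
      split_ifs <;> simp [cR]
    have e3 : (if r then cR m.2.2.succ m.1.succ m.2.1.succ else 0) =
        (if r then (c48 m.2.2.succ m.1.succ m.2.1.succ : ℝ) else 0) / 48 := by
      split_ifs <;> simp [cR]
    rw [e1, e2, e3]; ring
  rw [Finset.sum_congr rfl fun m _ => h2 m, ← Finset.sum_div,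
    le_div_iff₀ (by norm_num : (0:ℝ) < 2304)]
  linarith

end SMLB

open SMLB in
theorem second_moment_lower_bound
    {V : Type*} [Fintype V] [DecidableEq V]
    (𝒞 : Finset (Constraint V)) (m : ℕ) (hm : 𝒞.card = m)
    (h𝒞 : ∀ C ∈ 𝒞, IsProperConstraint C)
    (hirr : IrreducibleInstance 𝒞) :
    (11 / 768 : ℝ) * m ≤
      (∑ φ : V → Fin 4, (∑ C ∈ 𝒞, weight φ C) ^ 2) / 4 ^ Fintype.card V := by
  classical
  set n := Fintype.card V with hn
  set N : ℝ := (4 : ℝ) ^ n with hN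
  have hNpos : (0 : ℝ) < N := by positivity
  set X : (V → Fin 4) → ℝ := fun φ => ∑ C ∈ 𝒞, weight φ C with hX
  -- full-support masks on a set `T`
  set fullMasks : Finset V → Finset (V → Fin 4) :=
    fun T => Finset.univ.filter (fun μ => ∀ v, μ v ≠ 0 ↔ v ∈ T) with hfull
  set S : Finset (V → Fin 4) := (𝒞.image varsC).biUnion fullMasks with hS
  -- Step 1: Bessel
  have hbessel := bessel S X
  -- Step 2: the Fourier coefficient of `X` at a full mask
  have hhat : ∀ T ∈ 𝒞.image varsC, ∀ μ ∈ fullMasks T,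
      ∑ φ : V → Fin 4, X φ * chi μ φ =
        N * ∑ C ∈ 𝒞.filter (fun C => varsC C = T), hatw μ C := by
    intro T hT μ hμ
    obtain ⟨C₀, hC₀, hvC₀⟩ := Finset.mem_image.mp hT
    have hTcard : T.card = 3 := by rw [← hvC₀]; exact card_varsC C₀ (h𝒞 C₀ hC₀)
    simp only [hfull, Finset.mem_filter] at hμ
    have hsupp := hμ.2
    rw [hN, hn]
    have hswap : ∑ φ : V → Fin 4, X φ * chi μ φ =
        ∑ C ∈ 𝒞, ∑ φ : V → Fin 4, weight φ C * chi μ φ := by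
      calc ∑ φ : V → Fin 4, X φ * chi μ φ
          = ∑ φ : V → Fin 4, ∑ C ∈ 𝒞, weight φ C * chi μ φ := by
            refine Finset.sum_congr rfl fun φ _ => ?_
            simp only [hX]
            rw [Finset.sum_mul]
        _ = ∑ C ∈ 𝒞, ∑ φ : V → Fin 4, weight φ C * chi μ φ := Finset.sum_comm
    rw [hswap, Finset.sum_congr rfl fun C hC => hat_weight C (h𝒞 C hC) μ]
    have hcond : ∀ C ∈ 𝒞, ((∀ v, v ∉ varsC C → μ v = 0) ↔ varsC C = T) := by
      intro C hC
      constructor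
      · intro hz
        have hsub : T ⊆ varsC C := by
          intro v hv
          by_contra hnv
          exact ((hsupp v).mpr hv) (hz v hnv)
        exact (Finset.eq_of_subset_of_card_le hsub
          (by rw [hTcard, card_varsC C (h𝒞 C hC)])).symm
      · intro hve v hv
        by_contra hnz
        exact hv (hve ▸ ((hsupp v).mp hnz))
    rw [Finset.sum_congr rfl fun C hC => if_congr (hcond C hC) rfl rfl]
    rw [← Finset.sum_filter, Finset.mul_sum]
  -- Step 3: per-triple lower bound
  have hper : ∀ T ∈ 𝒞.image varsC,
      (11 / 768 : ℝ) * (𝒞.filter (fun C => varsC C = T)).card ≤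
        ∑ μ ∈ fullMasks T, (∑ C ∈ 𝒞.filter (fun C => varsC C = T), hatw μ C) ^ 2 := by
    intro T hT
    obtain ⟨C₀, hC₀, hvC₀⟩ := Finset.mem_image.mp hT
    obtain ⟨x, y, h2, hxy, hix, hiy⟩ := h𝒞 C₀ hC₀
    set i := C₀.1 with hi
    have hTeq : T = {i, x, y} := by
      rw [← hvC₀]
      have hCeq : C₀ = (C₀.1, s(x, y)) := by rw [← h2]
      rw [hCeq, varsC_mk]
    set fiber := 𝒞.filter (fun C => varsC C = T) with hfib
    set P1 : Constraint V := (i, s(x, y)) with hP1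
    set P2 : Constraint V := (x, s(i, y)) with hP2
    set P3 : Constraint V := (y, s(i, x)) with hP3
    have hP12 : P1 ≠ P2 := fun h => hix (by simpa [hP1, hP2] using congrArg Prod.fst h)
    have hP13 : P1 ≠ P3 := fun h => hiy (by simpa [hP1, hP3] using congrArg Prod.fst h)
    have hP23 : P2 ≠ P3 := fun h => hxy (by simpa [hP2, hP3] using congrArg Prod.fst h)
    -- the fiber is contained in the complete triple
    have hsub : fiber ⊆ {P1, P2, P3} := by
      intro C hC
      rw [hfib, Finset.mem_filter] at hC
      obtain ⟨hCmem, hCv⟩ := hC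
      obtain ⟨b, c, hbc, hbc', hab, hac⟩ := h𝒞 C hCmem
      have hCeq : C = (C.1, s(b, c)) := by rw [← hbc]
      have hvars : ({C.1, b, c} : Finset V) = {i, x, y} := by
        rw [← hTeq, ← hCv]
        conv_rhs => rw [hCeq, varsC_mk]
      have hmem : ∀ z ∈ ({C.1, b, c} : Finset V), z = i ∨ z = x ∨ z = y := by
        intro z hz
        have hz2 : z ∈ ({i, x, y} : Finset V) := hvars ▸ hz
        simpa using hz2
      have ha' := hmem C.1 (by simp)
      have hb' := hmem b (by simp)
      have hc' := hmem c (by simp)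
      -- each of i, x, y is in {C.1, b, c}
      have hmem' : ∀ z ∈ ({i, x, y} : Finset V), z = C.1 ∨ z = b ∨ z = c := by
        intro z hz
        have : z ∈ ({C.1, b, c} : Finset V) := by rw [hvars]; exact hz
        simpa using this
      simp only [Finset.mem_insert, Finset.mem_singleton]
      -- case analysis on C.1
      rcases ha' with h | h | h
      · left
        rw [hCeq, hP1, h]
        have : s(b, c) = s(x, y) := by
          rcases hb' with hb | hb | hb
        -- b = i impossible: b ≠ C.1 = i
          · exact absurd (hb.trans h.symm) (Ne.symm hab)
          · rcases hc' with hcq | hcq | hcq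
            · exact absurd (hcq.trans h.symm) (Ne.symm hac)
            · exact absurd (hcq.trans hb.symm) (Ne.symm hbc')
            · rw [hb, hcq]
          · rcases hc' with hcq | hcq | hcq
            · exact absurd (hcq.trans h.symm) (Ne.symm hac)
            · rw [hb, hcq]; exact Sym2.eq_swap
            · exact absurd (hcq.trans hb.symm) (Ne.symm hbc')
        rw [this]
      · right; left
        rw [hCeq, hP2, h]
        have : s(b, c) = s(i, y) := by
          rcases hb' with hb | hb | hb
          · rcases hc' with hcq | hcq | hcq
            · exact absurd (hcq.trans hb.symm) (Ne.symm hbc')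
            · exact absurd (hcq.trans h.symm) (Ne.symm hac)
            · rw [hb, hcq]
          · exact absurd (hb.trans h.symm) (Ne.symm hab)
          · rcases hc' with hcq | hcq | hcq
            · rw [hb, hcq]; exact Sym2.eq_swap
            · exact absurd (hcq.trans h.symm) (Ne.symm hac)
            · exact absurd (hcq.trans hb.symm) (Ne.symm hbc')
        rw [this]
      · right; right
        rw [hCeq, hP3, h]
        have : s(b, c) = s(i, x) := by
          rcases hb' with hb | hb | hb
          · rcases hc' with hcq | hcq | hcq
            · exact absurd (hcq.trans hb.symm) (Ne.symm hbc')
            · rw [hb, hcq]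
            · exact absurd (hcq.trans h.symm) (Ne.symm hac)
          · rcases hc' with hcq | hcq | hcq
            · rw [hb, hcq]; exact Sym2.eq_swap
            · exact absurd (hcq.trans hb.symm) (Ne.symm hbc')
            · exact absurd (hcq.trans h.symm) (Ne.symm hac)
          · exact absurd (hb.trans h.symm) (Ne.symm hab)
        rw [this]
    -- not all three constraints can be present
    have hnotall : ¬(P1 ∈ fiber ∧ P2 ∈ fiber ∧ P3 ∈ fiber) := by
      rintro ⟨hf1, hf2, hf3⟩
      apply hirr
      refine ⟨i, x, y, hix, hiy, hxy, ?_⟩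
      intro C hC
      simp only [completeTriple, Finset.mem_insert, Finset.mem_singleton] at hC
      rcases hC with rfl | rfl | rfl
      · exact (Finset.mem_filter.mp hf1).1
      · exact (Finset.mem_filter.mp hf2).1
      · exact (Finset.mem_filter.mp hf3).1
    -- sums over the fiber decompose into three indicator terms
    have hfibeq : fiber = ({P1, P2, P3} : Finset (Constraint V)).filter (· ∈ fiber) := by
      ext C
      simp only [Finset.mem_filter]
      exact ⟨fun hC => ⟨hsub hC, hC⟩, fun h => h.2⟩
    have hsum3 : ∀ f : Constraint V → ℝ, ∑ C ∈ fiber, f C =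
        (if P1 ∈ fiber then f P1 else 0) + (if P2 ∈ fiber then f P2 else 0) +
        (if P3 ∈ fiber then f P3 else 0) := by
      intro f
      conv_lhs => rw [hfibeq]
      rw [Finset.sum_filter]
      rw [show ({P1, P2, P3} : Finset (Constraint V)) = insert P1 (insert P2 {P3}) from rfl,
        Finset.sum_insert (by simp [hP12, hP13]),
        Finset.sum_insert (by simp [hP23]), Finset.sum_singleton]
      ring
    have hcard3 : (fiber.card : ℝ) =
        (if P1 ∈ fiber then (1:ℝ) else 0) + (if P2 ∈ fiber then 1 else 0) +
        (if P3 ∈ fiber then 1 else 0) := by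
      have hcnat : fiber.card = (if P1 ∈ fiber then 1 else 0) + (if P2 ∈ fiber then 1 else 0) +
          (if P3 ∈ fiber then 1 else 0) := by
        conv_lhs => rw [hfibeq]
        rw [Finset.card_filter,
          show ({P1, P2, P3} : Finset (Constraint V)) = insert P1 (insert P2 {P3}) from rfl,
          Finset.sum_insert (by simp [hP12, hP13]),
          Finset.sum_insert (by simp [hP23]), Finset.sum_singleton]
        exact (add_assoc _ _ _).symm
      rw [hcnat]
      push_cast [apply_ite (Nat.cast : ℕ → ℝ)]
      norm_num
    -- reparametrize the full masks on T by triples of nonzero masks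
    set emb : Fin 3 × Fin 3 × Fin 3 → (V → Fin 4) :=
      fun m => fun v => if v = i then m.1.succ else if v = x then m.2.1.succ
        else if v = y then m.2.2.succ else 0 with hemb
    have hembi : ∀ m v, (emb m v ≠ 0 ↔ v ∈ T) := by
      intro m v
      rw [hTeq]
      simp only [hemb]
      by_cases hv1 : v = i
      · rw [if_pos hv1]; simp [succ_ne_zero', hv1]
      · by_cases hv2 : v = x
        · rw [if_neg hv1, if_pos hv2]; simp [succ_ne_zero', hv2]
        · by_cases hv3 : v = y
          · rw [if_neg hv1, if_neg hv2, if_pos hv3]; simp [succ_ne_zero', hv3]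
          · rw [if_neg hv1, if_neg hv2, if_neg hv3]; simp [hv1, hv2, hv3]
    have hlinv : ∀ μ ∈ fullMasks T, emb (pre (μ i), pre (μ x), pre (μ y)) = μ := by
      intro μ hμ
      simp only [hfull, Finset.mem_filter] at hμ
      have hsupp := hμ.2
      funext v
      simp only [hemb]
      by_cases hv1 : v = i
      · rw [if_pos hv1, hv1]
        exact succ_pre _ ((hsupp i).mpr (by rw [hTeq]; simp))
      · by_cases hv2 : v = x
        · rw [if_neg hv1, if_pos hv2, hv2]
          exact succ_pre _ ((hsupp x).mpr (by rw [hTeq]; simp))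
        · by_cases hv3 : v = y
          · rw [if_neg hv1, if_neg hv2, if_pos hv3, hv3]
            exact succ_pre _ ((hsupp y).mpr (by rw [hTeq]; simp))
          · rw [if_neg hv1, if_neg hv2, if_neg hv3]
            symm
            by_contra hnz
            have hmemT := (hsupp v).mp hnz
            rw [hTeq] at hmemT
            simp [hv1, hv2, hv3] at hmemT
    have hei : ∀ m : Fin 3 × Fin 3 × Fin 3, emb m i = m.1.succ := by
      intro m; simp only [hemb]; simp
    have hex : ∀ m : Fin 3 × Fin 3 × Fin 3, emb m x = m.2.1.succ := by
      intro m; simp only [hemb]; simp [Ne.symm hix]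
    have hey : ∀ m : Fin 3 × Fin 3 × Fin 3, emb m y = m.2.2.succ := by
      intro m; simp only [hemb]; simp [Ne.symm hiy, Ne.symm hxy]
    have hbij : ∀ G : (V → Fin 4) → ℝ,
        ∑ μ ∈ fullMasks T, G μ = ∑ m : Fin 3 × Fin 3 × Fin 3, G (emb m) := by
      intro G
      refine Finset.sum_nbij' (fun μ => (pre (μ i), pre (μ x), pre (μ y))) emb
        (fun μ _ => Finset.mem_univ _)
        (fun m _ => by
          simp only [hfull, Finset.mem_filter]
          exact ⟨Finset.mem_univ _, hembi m⟩)
        hlinv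
        (fun m _ => by
          show (pre (emb m i), pre (emb m x), pre (emb m y)) = m
          rw [hei, hex, hey, pre_succ, pre_succ, pre_succ])
        (fun μ hμ => by rw [hlinv μ hμ])
    -- final computation per triple
    have hparam : ∑ μ ∈ fullMasks T, (∑ C ∈ fiber, hatw μ C) ^ 2 =
        ∑ m : Fin 3 × Fin 3 × Fin 3, (∑ C ∈ fiber, hatw (emb m) C) ^ 2 :=
      hbij _
    rw [hparam]
    have hterm : ∀ m : Fin 3 × Fin 3 × Fin 3,
        (∑ C ∈ fiber, hatw (emb m) C) ^ 2 =
        ((if (P1 ∈ fiber) then cR m.1.succ m.2.1.succ m.2.2.succ else 0) +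
         (if (P2 ∈ fiber) then cR m.2.1.succ m.1.succ m.2.2.succ else 0) +
         (if (P3 ∈ fiber) then cR m.2.2.succ m.1.succ m.2.1.succ else 0)) ^ 2 := by
      intro m
      have b1 : hatw (emb m) P1 = cR m.1.succ m.2.1.succ m.2.2.succ := by
        rw [hP1, hatw_mk, hei, hex, hey]
      have b2 : hatw (emb m) P2 = cR m.2.1.succ m.1.succ m.2.2.succ := by
        rw [hP2, hatw_mk, hei, hex, hey]
      have b3 : hatw (emb m) P3 = cR m.2.2.succ m.1.succ m.2.1.succ := by
        rw [hP3, hatw_mk, hei, hex, hey]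
      rw [hsum3 (hatw (emb m)), b1, b2, b3]
    rw [Finset.sum_congr rfl fun mm _ => hterm mm, hcard3]
    exact key_ineqR (P1 ∈ fiber) (P2 ∈ fiber) (P3 ∈ fiber) hnotall
  -- Step 4: assemble
  have hdisj : Set.PairwiseDisjoint ↑(𝒞.image varsC) fullMasks := by
    intro T1 h1 T2 h2 hne
    refine Finset.disjoint_left.mpr fun μ hμ1 hμ2 => ?_
    simp only [hfull, Finset.mem_filter] at hμ1 hμ2
    apply hne
    ext v
    rw [← hμ1.2 v, hμ2.2 v]
  have hSsum : ∑ μ ∈ S, (∑ φ : V → Fin 4, X φ * chi μ φ) ^ 2 / N =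
      ∑ T ∈ 𝒞.image varsC, ∑ μ ∈ fullMasks T,
        (∑ φ : V → Fin 4, X φ * chi μ φ) ^ 2 / N := by
    rw [hS, Finset.sum_biUnion hdisj]
  have hlower : (11 / 768 : ℝ) * m * N ≤ ∑ μ ∈ S, (∑ φ : V → Fin 4, X φ * chi μ φ) ^ 2 / N := by
    rw [hSsum]
    have hTbound : ∀ T ∈ 𝒞.image varsC,
        (11 / 768 : ℝ) * (𝒞.filter (fun C => varsC C = T)).card * N ≤
          ∑ μ ∈ fullMasks T, (∑ φ : V → Fin 4, X φ * chi μ φ) ^ 2 / N := by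
      intro T hT
      have : ∀ μ ∈ fullMasks T, (∑ φ : V → Fin 4, X φ * chi μ φ) ^ 2 / N =
          N * (∑ C ∈ 𝒞.filter (fun C => varsC C = T), hatw μ C) ^ 2 := by
        intro μ hμ
        rw [hhat T hT μ hμ, mul_pow]
        have hNne : N ≠ 0 := ne_of_gt hNpos
        field_simp
      rw [Finset.sum_congr rfl this, ← Finset.mul_sum]
      have := hper T hT
      calc (11 / 768 : ℝ) * (𝒞.filter (fun C => varsC C = T)).card * N
          = N * ((11 / 768 : ℝ) * (𝒞.filter (fun C => varsC C = T)).card) := by ring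
        _ ≤ N * ∑ μ ∈ fullMasks T, (∑ C ∈ 𝒞.filter (fun C => varsC C = T), hatw μ C) ^ 2 :=
            mul_le_mul_of_nonneg_left this (le_of_lt hNpos)
    calc (11 / 768 : ℝ) * m * N
        = ∑ T ∈ 𝒞.image varsC, (11 / 768 : ℝ) *
            (𝒞.filter (fun C => varsC C = T)).card * N := by
          rw [← hm, Finset.card_eq_sum_card_fiberwise
            (f := varsC) (t := 𝒞.image varsC) (fun C hC => Finset.mem_image_of_mem varsC hC)]
          push_cast
          rw [Finset.mul_sum, Finset.sum_mul]
      _ ≤ _ := Finset.sum_le_sum hTbound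
  -- combine with Bessel
  rw [← hn, ← hN] at hbessel
  have hfinal := le_trans hlower hbessel
  rw [hN] at hfinal
  simp only [hX] at hfinal
  rw [le_div_iff₀ hNpos]
  exact hfinal

end
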